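/- Let M ⊆ 𝔤 be a graded subspace (i.e., M = Σ_i (M ∩ 𝔤_i)) that is invariant under ad x, ad h, and ad y. Then M ∩ 𝔭 is the internal direct sum of {u ∈ M ∩ 𝔭 : ⁅u, y⁆ = 0} and ⁅x, M⁆ ∩ 𝔭; in particular the space of y-annihilated vectors of M of nonnegative degree is a complement to ⁅x, M⁆ in M ∩ 𝔭. -/

import Mathlib

open Module Polynomial LinearMap

section Sl2Aux
variable {K V : Type*} [Field K] [CharZero K] [AddCommGroup V] [Module K V]
variable (E F Had : Module.End K V)

omit [CharZero K] in
lemma sl2_HF (hHF : Had * F - F * Had = (-2 : K) • F) :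
    Had * F = F * Had + (-2 : K) • F := by
  rw [← hHF]; abel

lemma sl2_B (hHF : Had * F - F * Had = (-2 : K) • F) (n : ℕ) :
    Had * F ^ n = F ^ n * Had - ((2 * n : ℕ) : K) • F ^ n := by
  induction n with
  | zero => simp
  | succ n ih =>
      calc Had * F ^ (n+1) = (Had * F ^ n) * F := by rw [pow_succ, mul_assoc]
        _ = (F ^ n * Had - ((2*n : ℕ) : K) • F ^ n) * F := by rw [ih]
        _ = F ^ n * (Had * F) - ((2*n : ℕ) : K) • F ^ (n+1) := by
            rw [sub_mul, smul_mul_assoc, mul_assoc, ← pow_succ]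
        _ = F ^ n * (F * Had + (-2 : K) • F) - ((2*n : ℕ) : K) • F ^ (n+1) := by
            rw [sl2_HF F Had hHF]
        _ = F ^ (n+1) * Had + (-2 : K) • F ^ (n+1) - ((2*n : ℕ) : K) • F ^ (n+1) := by
            rw [mul_add, ← mul_assoc, ← pow_succ, mul_smul_comm, ← pow_succ]
        _ = F ^ (n+1) * Had - ((2 * (n+1) : ℕ) : K) • F ^ (n+1) := by
            push_cast; module

lemma sl2_A (hH : E * F - F * E = Had) (hHF : Had * F - F * Had = (-2 : K) • F) (n : ℕ) :
    E * F ^ (n+1) = F ^ (n+1) * E + ((n+1 : ℕ) : K) • (F ^ n * Had)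
      - (((n+1) * n : ℕ) : K) • F ^ n := by
  induction n with
  | zero =>
      have hEF : E * F = F * E + Had := by rw [← hH]; abel
      simpa using hEF
  | succ n ih =>
      have hEF : E * F = F * E + Had := by rw [← hH]; abel
      calc E * F ^ (n+2) = (E * F ^ (n+1)) * F := by rw [pow_succ, mul_assoc]
        _ = (F ^ (n+1) * E + ((n+1 : ℕ) : K) • (F ^ n * Had)
              - (((n+1)*n : ℕ) : K) • F ^ n) * F := by rw [ih]
        _ = F ^ (n+1) * (E * F) + ((n+1 : ℕ) : K) • (F ^ n * (Had * F))
              - (((n+1)*n : ℕ) : K) • F ^ (n+1) := by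
            rw [sub_mul, add_mul, smul_mul_assoc, smul_mul_assoc, mul_assoc, mul_assoc,
              ← pow_succ]
        _ = F ^ (n+1) * (F * E + Had) + ((n+1 : ℕ) : K) • (F ^ n * (F * Had + (-2:K) • F))
              - (((n+1)*n : ℕ) : K) • F ^ (n+1) := by
            rw [hEF, sl2_HF F Had hHF]
        _ = F ^ (n+2) * E + F ^ (n+1) * Had
              + ((n+1 : ℕ) : K) • (F ^ (n+1) * Had + (-2:K) • F ^ (n+1))
              - (((n+1)*n : ℕ) : K) • F ^ (n+1) := by
            rw [mul_add, mul_add, ← mul_assoc, ← mul_assoc, ← pow_succ, ← pow_succ,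
              mul_smul_comm, ← pow_succ]
        _ = F ^ (n+2) * E + ((n+2 : ℕ) : K) • (F ^ (n+1) * Had)
              - (((n+2)*(n+1) : ℕ) : K) • F ^ (n+1) := by
            push_cast; module


variable {E F Had}

omit [CharZero K] in
lemma sl2_kerE_stable (hHE : Had * E - E * Had = (2 : K) • E) {v : V} (hv : E v = 0) (c : K) :
    E (Had v + c • v) = 0 := by
  have h : E * Had = Had * E - (2:K) • E := by rw [← hHE]; abel
  have h2 : E (Had v) = (Had * E - (2:K) • E) v := by rw [← h]; rfl
  simp only [LinearMap.sub_apply, LinearMap.smul_apply, Module.End.mul_apply, hv,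
    map_zero, smul_zero, sub_zero] at h2
  simp [h2, hv]

lemma sl2_step_down (hH : E * F - F * E = Had) (hHE : Had * E - E * Had = (2 : K) • E)
    (hHF : Had * F - F * Had = (-2 : K) • F) (n : ℕ) {v : V} (hv1 : E v = 0)
    (hv2 : v ∈ LinearMap.range (F ^ (n+1))) :
    E (Had v + ((n+2 : ℕ) : K) • v) = 0 ∧
      Had v + ((n+2 : ℕ) : K) • v ∈ LinearMap.range (F ^ (n+2)) := by
  refine ⟨sl2_kerE_stable hHE hv1 _, ?_⟩
  obtain ⟨u, hu⟩ := hv2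
  have hA := congrArg (fun T : Module.End K V => T u) (sl2_A E F Had hH hHF n)
  simp only [Module.End.mul_apply, LinearMap.add_apply, LinearMap.sub_apply,
    LinearMap.smul_apply] at hA
  rw [hu, hv1] at hA
  have hB := congrArg (fun T : Module.End K V => T u) (sl2_B F Had hHF (n+1))
  simp only [Module.End.mul_apply, LinearMap.sub_apply, LinearMap.smul_apply] at hB
  rw [hu] at hB
  have e1 : (F ^ (n+1)) (E u) = (((n+1)*n : ℕ) : K) • (F ^ n) u
      - ((n+1 : ℕ) : K) • (F ^ n) (Had u) := by
    linear_combination (norm := module) (-1 : K) • hA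
  have e3 : (F ^ (n+1)) (Had u) = Had v + ((2*(n+1) : ℕ) : K) • v := by
    linear_combination (norm := module) (-1 : K) • hB
  have comp : ∀ (k : ℕ) (w : V), (F ^ (k+1)) w = F ((F ^ k) w) := fun k w => by
    rw [pow_succ' F k]; rfl
  have compv : F ((F ^ n) u) = v := by rw [← hu, pow_succ' F n]; rfl
  have hc1 : (F ^ (n+2)) (E u) = (((n+1)*n : ℕ) : K) • v
      - ((n+1 : ℕ) : K) • (Had v + ((2*(n+1) : ℕ) : K) • v) := by
    rw [comp (n+1), e1, map_sub, map_smul, map_smul, compv, ← comp n, e3]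
  have hne : ((n+1 : ℕ) : K) ≠ 0 := Nat.cast_ne_zero.mpr (Nat.succ_ne_zero n)
  have key : ((n+1:ℕ):K) • (Had v + ((n+2:ℕ):K) • v) = (F ^ (n+2)) (-(E u)) := by
    rw [map_neg, hc1]; push_cast; module
  refine ⟨((n+1:ℕ):K)⁻¹ • (-(E u)), ?_⟩
  rw [map_smul, ← key, inv_smul_smul₀ hne]

lemma sl2_step_up (hH : E * F - F * E = Had) (hHE : Had * E - E * Had = (2 : K) • E)
    (hHF : Had * F - F * Had = (-2 : K) • F) (n : ℕ) {v : V} (hv1 : E v = 0)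
    (hv2 : (F ^ (n+1)) v = 0) :
    E (Had v - ((n : ℕ) : K) • v) = 0 ∧ (F ^ n) (Had v - ((n : ℕ) : K) • v) = 0 := by
  constructor
  · have := sl2_kerE_stable hHE hv1 (-((n:ℕ):K))
    rwa [neg_smul, ← sub_eq_add_neg] at this
  · have hA := congrArg (fun T : Module.End K V => T v) (sl2_A E F Had hH hHF n)
    simp only [Module.End.mul_apply, LinearMap.add_apply, LinearMap.sub_apply,
      LinearMap.smul_apply] at hA
    rw [hv2, hv1, map_zero, map_zero] at hA
    have hne : ((n+1 : ℕ) : K) ≠ 0 := Nat.cast_ne_zero.mpr (Nat.succ_ne_zero n)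
    have key : ((n+1:ℕ):K) • ((F ^ n) (Had v - ((n:ℕ):K) • v)) = 0 := by
      rw [map_sub, map_smul]
      linear_combination (norm := module) (-1 : K) • hA
    exact (smul_eq_zero.mp key).resolve_left hne

lemma sl2_down_chain (hH : E * F - F * E = Had) (hHE : Had * E - E * Had = (2 : K) • E)
    (hHF : Had * F - F * Had = (-2 : K) • F) (n k : ℕ) {v : V} (h1 : E v = 0)
    (h2 : v ∈ LinearMap.range (F ^ (n+1))) :
    E ((aeval Had (∏ j ∈ Finset.range k, (X + C ((n+j+2 : ℕ) : K)))) v) = 0 ∧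
      (aeval Had (∏ j ∈ Finset.range k, (X + C ((n+j+2 : ℕ) : K)))) v
        ∈ LinearMap.range (F ^ (n+1+k)) := by
  induction k with
  | zero => simpa using ⟨h1, h2⟩
  | succ k ih =>
    obtain ⟨ih1, ih2⟩ := ih
    have ih2' : (aeval Had (∏ j ∈ Finset.range k, (X + C ((n+j+2 : ℕ) : K)))) v
        ∈ LinearMap.range (F ^ ((n+k)+1)) := by
      rwa [show (n+k)+1 = n+1+k by omega]
    have hs := sl2_step_down hH hHE hHF (n+k) ih1 ih2'
    have heq : (aeval Had (∏ j ∈ Finset.range (k+1), (X + C ((n+j+2 : ℕ) : K)))) v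
        = Had ((aeval Had (∏ j ∈ Finset.range k, (X + C ((n+j+2 : ℕ) : K)))) v)
          + (((n+k)+2 : ℕ) : K) •
            ((aeval Had (∏ j ∈ Finset.range k, (X + C ((n+j+2 : ℕ) : K)))) v) := by
      rw [Finset.prod_range_succ, mul_comm, map_mul, Module.End.mul_apply]
      simp only [map_add, aeval_X, aeval_C, LinearMap.add_apply,
        Module.algebraMap_end_apply]
    rw [heq, show n+1+(k+1) = (n+k)+2 by omega]
    exact hs

lemma sl2_up_chain (hH : E * F - F * E = Had) (hHE : Had * E - E * Had = (2 : K) • E)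
    (hHF : Had * F - F * Had = (-2 : K) • F) :
    ∀ (n : ℕ) {v : V}, E v = 0 → (F ^ n) v = 0 →
      (aeval Had (∏ j ∈ Finset.range n, (X - C ((j : ℕ) : K)))) v = 0 := by
  intro n
  induction n with
  | zero =>
    intro v h1 h2
    simp only [pow_zero, Module.End.one_apply] at h2
    rw [h2, map_zero]
  | succ n ih =>
    intro v h1 h2
    have hs := sl2_step_up hH hHE hHF n h1 h2
    rw [Finset.prod_range_succ, map_mul, Module.End.mul_apply]
    have heq : (aeval Had (X - C ((n : ℕ) : K))) v = Had v - ((n:ℕ):K) • v := by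
      simp only [map_sub, aeval_X, aeval_C, LinearMap.sub_apply,
        Module.algebraMap_end_apply]
    rw [heq]
    exact ih hs.1 hs.2

lemma sl2_ker_inf_range (hH : E * F - F * E = Had) (hHE : Had * E - E * Had = (2 : K) • E)
    (hHF : Had * F - F * Had = (-2 : K) • F) (N : ℕ) (hFN : F ^ N = 0) :
    LinearMap.ker E ⊓ LinearMap.range F = ⊥ := by
  rw [eq_bot_iff]
  rintro v ⟨hv1, hv2⟩
  simp only [Submodule.mem_bot]
  have hv1' : E v = 0 := hv1
  have hFN1 : F ^ (N+1) = 0 := by rw [pow_succ, hFN, zero_mul]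
  set q2 : K[X] := ∏ j ∈ Finset.range N, (X + C ((0+j+2 : ℕ) : K)) with hq2def
  have hv2' : v ∈ LinearMap.range (F ^ (0+1)) := by simpa using hv2
  have down := (sl2_down_chain hH hHE hHF 0 N hv1' hv2').2
  rw [show 0+1+N = N+1 by omega, hFN1] at down
  have d2 : (aeval Had q2) v = 0 := by
    rw [LinearMap.range_zero, Submodule.mem_bot] at down
    exact down
  set q1 : K[X] := ∏ j ∈ Finset.range (N+1), (X - C ((j : ℕ) : K)) with hq1def
  have u2 : (aeval Had q1) v = 0 := by
    refine sl2_up_chain hH hHE hHF (N+1) hv1' ?_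
    rw [hFN1]; rfl
  have hcop : IsCoprime q1 q2 := by
    rw [hq1def, hq2def]
    refine IsCoprime.prod_left fun i _ => IsCoprime.prod_right fun j _ => ?_
    have : (X + C ((0+j+2 : ℕ) : K)) = X - C (-((0+j+2 : ℕ) : K)) := by
      rw [map_neg, sub_neg_eq_add]
    rw [this]
    refine Polynomial.isCoprime_X_sub_C_of_isUnit_sub ?_
    rw [isUnit_iff_ne_zero]
    intro hcon
    have : ((i : K)) + ((0+j+2 : ℕ) : K) = 0 := by linear_combination hcon
    have h0 : ((i + (0+j+2) : ℕ) : K) = 0 := by rw [Nat.cast_add]; exact this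
    have h1 : (i + (0+j+2) : ℕ) = 0 := Nat.cast_eq_zero.mp h0
    omega
  obtain ⟨a, b, hab⟩ := hcop
  have := congrArg (fun p : K[X] => (aeval Had p) v) hab
  simp only [map_add, map_mul, Module.End.mul_apply, map_one, LinearMap.add_apply,
    Module.End.one_apply, d2, u2, map_zero, add_zero] at this
  exact this.symm

end Sl2Aux

section Graded
variable {K L : Type*} [Field K] [AddCommGroup L] [Module K L]
variable (g : ℤ → Submodule K L)

/-- Projection onto the `i`-th graded piece of an internal direct sum. -/
noncomputable def gproj (hdsum : DirectSum.IsInternal g) (i : ℤ) : L →ₗ[K] L :=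
  (g i).subtype ∘ₗ (DirectSum.component K ℤ (fun j => (g j : Type _)) i) ∘ₗ
    (LinearEquiv.ofBijective (DirectSum.coeLinearMap g) hdsum).symm.toLinearMap

variable {g}
variable (hdsum : DirectSum.IsInternal g)

lemma gproj_apply (i : ℤ) (u : L) :
    gproj g hdsum i u =
      ((LinearEquiv.ofBijective (DirectSum.coeLinearMap g) hdsum).symm u i : L) := rfl

lemma gproj_mem (i : ℤ) (u : L) : gproj g hdsum i u ∈ g i :=
  ((LinearEquiv.ofBijective (DirectSum.coeLinearMap g) hdsum).symm u i).2

lemma gproj_eq_self {i : ℤ} {u : L} (hu : u ∈ g i) : gproj g hdsum i u = u := by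
  rw [gproj_apply, hdsum.ofBijective_coeLinearMap_of_mem hu]

lemma gproj_eq_zero {i j : ℤ} {u : L} (hu : u ∈ g j) (hij : j ≠ i) :
    gproj g hdsum i u = 0 := by
  rw [gproj_apply, hdsum.ofBijective_coeLinearMap_of_mem_ne hij hu,
    Submodule.coe_zero]

lemma gproj_mem_biSup {p : ℤ → Prop} {u : L} (hu : ∀ i, ¬ p i → gproj g hdsum i u = 0) :
    u ∈ ⨆ i, ⨆ (_ : p i), g i := by
  classical
  set dec := LinearEquiv.ofBijective (DirectSum.coeLinearMap g) hdsum with hdec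
  have hu' : u = DirectSum.coeLinearMap g (dec.symm u) := (dec.apply_symm_apply u).symm
  rw [hu', DirectSum.coeLinearMap_eq_dfinsuppSum]
  refine Submodule.dfinsuppSum_mem _ _ _ fun i hi => ?_
  by_cases hp : p i
  · exact Submodule.mem_iSup_of_mem i (Submodule.mem_iSup_of_mem hp (dec.symm u i).2)
  · have : ((dec.symm u i : L)) = 0 := hu i hp
    rw [this]
    exact Submodule.zero_mem _

lemma gproj_eq_zero_of_mem_biSup {p : ℤ → Prop} {u : L}
    (hu : u ∈ ⨆ i, ⨆ (_ : p i), g i) {j : ℤ} (hj : ¬ p j) :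
    gproj g hdsum j u = 0 := by
  have hle : (⨆ i, ⨆ (_ : p i), g i) ≤ LinearMap.ker (gproj g hdsum j) := by
    refine iSup_le fun i => iSup_le fun hpi => ?_
    intro v hv
    have : i ≠ j := fun h => hj (h ▸ hpi)
    exact gproj_eq_zero hdsum hv this
  exact hle hu

lemma gproj_comm (htop : ⨆ i, g i = ⊤) (T : Module.End K L) (d : ℤ)
    (hT : ∀ i, ∀ v ∈ g i, T v ∈ g (i + d)) (i : ℤ) (u : L) :
    T (gproj g hdsum i u) = gproj g hdsum (i + d) (T u) := by
  have hu : u ∈ (⨆ j, g j) := htop ▸ Submodule.mem_top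
  refine Submodule.iSup_induction g
    (motive := fun v => T (gproj g hdsum i v) = gproj g hdsum (i + d) (T v)) hu
    (fun j v hv => ?_) (by simp) (fun v w ihv ihw => ?_)
  · show T (gproj g hdsum i v) = gproj g hdsum (i + d) (T v)
    by_cases hij : j = i
    · subst hij
      rw [gproj_eq_self hdsum hv, gproj_eq_self hdsum (hT j v hv)]
    · rw [gproj_eq_zero hdsum hv hij, map_zero,
        gproj_eq_zero hdsum (hT j v hv) (fun hc => hij (by omega))]
  · show T (gproj g hdsum i (v + w)) = gproj g hdsum (i + d) (T (v + w))
    rw [map_add, map_add, ihv, ihw, ← map_add, ← map_add]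

lemma gproj_mem_of_graded {M : Submodule K L} (hMgraded : M = ⨆ i : ℤ, M ⊓ g i)
    {u : L} (hu : u ∈ M) (i : ℤ) : gproj g hdsum i u ∈ M := by
  have hle : (⨆ j : ℤ, M ⊓ g j) ≤ Submodule.comap (gproj g hdsum i) M := by
    refine iSup_le fun j => ?_
    rintro v ⟨hvM, hvg⟩
    simp only [Submodule.mem_comap]
    by_cases hij : j = i
    · subst hij; rw [gproj_eq_self hdsum hvg]; exact hvM
    · rw [gproj_eq_zero hdsum hvg hij]; exact M.zero_mem
  exact hle (hMgraded ▸ hu)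
end Graded

section Nilp
variable {K L : Type*} [Field K] [LieRing L] [LieAlgebra K L]
variable {g : ℤ → Submodule K L}

lemma ad_pow_mem (hbr : ∀ i j : ℤ, ∀ u ∈ g i, ∀ v ∈ g j, ⁅u, v⁆ ∈ g (i + j))
    {z : L} {d : ℤ} (hz : z ∈ g d) :
    ∀ (n : ℕ) (i : ℤ), ∀ v ∈ g i, ((LieAlgebra.ad K L z) ^ n) v ∈ g (i + n * d) := by
  intro n
  induction n with
  | zero => intro i v hv; simpa using hv
  | succ n ih =>
    intro i v hv
    have h1 : (LieAlgebra.ad K L z) v ∈ g (d + i) := hbr d i z hz v hv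
    have h2 := ih (d + i) _ h1
    have : ((LieAlgebra.ad K L z) ^ (n+1)) v
        = ((LieAlgebra.ad K L z) ^ n) ((LieAlgebra.ad K L z) v) := by
      rw [pow_succ]; rfl
    rw [this, show (i + (n+1 : ℕ) * d) = (d + i + (n:ℕ) * d) by push_cast; ring]
    exact h2

lemma ad_nilpotent (hdsum : DirectSum.IsInternal g) (hfin : {i : ℤ | g i ≠ ⊥}.Finite)
    (hbr : ∀ i j : ℤ, ∀ u ∈ g i, ∀ v ∈ g j, ⁅u, v⁆ ∈ g (i + j))
    {z : L} {d : ℤ} (hz : z ∈ g d) (hd : d ≠ 0) :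
    ∃ N : ℕ, (LieAlgebra.ad K L z) ^ N = 0 := by
  classical
  set s := hfin.toFinset with hs
  rcases s.eq_empty_or_nonempty with hse | hsne
  · refine ⟨1, ?_⟩
    ext v
    have hv : v ∈ (⊤ : Submodule K L) := Submodule.mem_top
    rw [← hdsum.submodule_iSup_eq_top] at hv
    have : (⨆ i, g i) = ⊥ := by
      refine le_bot_iff.mp (iSup_le fun i => ?_)
      have : g i = ⊥ := by
        by_contra hne
        have : i ∈ s := by rw [hs]; exact hfin.mem_toFinset.mpr hne
        simp [hse] at this
      exact this.le
    rw [this, Submodule.mem_bot] at hv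
    simp [hv]
  · set N : ℕ := ((s.max' hsne) - (s.min' hsne)).toNat + 1 with hN
    refine ⟨N, ?_⟩
    ext v
    simp only [LinearMap.zero_apply]
    have hv : v ∈ (⊤ : Submodule K L) := Submodule.mem_top
    rw [← hdsum.submodule_iSup_eq_top] at hv
    refine Submodule.iSup_induction g
      (motive := fun v => ((LieAlgebra.ad K L z) ^ N) v = 0) hv (fun i v hvi => ?_)
      (by simp) (fun v w ihv ihw => by
        show ((LieAlgebra.ad K L z) ^ N) (v + w) = 0
        rw [map_add, ihv, ihw, add_zero])
    by_cases hgi : g i = ⊥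
    · rw [hgi, Submodule.mem_bot] at hvi
      simp [hvi]
    · have his : i ∈ s := hfin.mem_toFinset.mpr hgi
      have hmem := ad_pow_mem hbr hz N i v hvi
      have hbig : (N : ℤ) ≥ (s.max' hsne) - (s.min' hsne) + 1 := by
        rw [hN]
        push_cast
        omega
      have hout : g (i + N * d) = ⊥ := by
        by_contra hne
        have hmem' : i + N * d ∈ s := hfin.mem_toFinset.mpr hne
        have h1 := s.le_max' _ hmem'
        have h2 := s.min'_le _ hmem'
        have h3 := s.le_max' _ his
        have h4 := s.min'_le _ his
        rcases lt_or_gt_of_ne hd with hdneg | hdpos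
        · nlinarith [hbig, hdneg]
        · nlinarith [hbig, hdpos]
      rw [hout, Submodule.mem_bot] at hmem
      exact hmem
end Nilp

section RN
variable {K L : Type*} [Field K] [AddCommGroup L] [Module K L] [FiniteDimensional K L]

lemma finrank_map_add_inf_ker (f : Module.End K L) (M : Submodule K L) :
    finrank K (M.map f) + finrank K ↥(M ⊓ LinearMap.ker f) = finrank K M := by
  have h1 := LinearMap.finrank_range_add_finrank_ker (f.domRestrict M)
  rw [LinearMap.range_domRestrict, LinearMap.ker_domRestrict] at h1
  have h2 : Submodule.comap M.subtype (LinearMap.ker f)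
      = Submodule.comap M.subtype (M ⊓ LinearMap.ker f) := by
    ext ⟨v, hv⟩
    simp [Submodule.mem_comap, hv]
  rw [h2, LinearEquiv.finrank_eq
    (Submodule.comapSubtypeEquivOfLe (inf_le_left : M ⊓ LinearMap.ker f ≤ M))] at h1
  exact h1
end RN

/-- The subspace `{u ∈ L : ⁅u, y⁆ = 0}`. -/
def kerRight {K L : Type*} [Field K] [LieRing L] [LieAlgebra K L] (y : L) :
    Submodule K L where
  carrier := {u : L | ⁅u, y⁆ = 0}
  zero_mem' := by simp
  add_mem' := by intro a b ha hb; rw [Set.mem_setOf_eq, add_lie, ha, hb, add_zero]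
  smul_mem' := by intro c a ha; rw [Set.mem_setOf_eq, smul_lie, ha, smul_zero]

theorem stmt5 {K L : Type*} [Field K] [CharZero K] [LieRing L] [LieAlgebra K L]
    [FiniteDimensional K L]
    (g : ℤ → Submodule K L)
    (hdsum : DirectSum.IsInternal g)
    (hfin : {i : ℤ | g i ≠ ⊥}.Finite)
    (hbr : ∀ i j : ℤ, ∀ u ∈ g i, ∀ v ∈ g j, ⁅u, v⁆ ∈ g (i + j))
    -- the graded `sl₂`-triple `(x, h, y)`:
    (x h y : L) (hx : x ∈ g (-1)) (hh : h ∈ g 0) (hy : y ∈ g 1)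
    (hhx : ⁅h, x⁆ = (-2 : K) • x) (hhy : ⁅h, y⁆ = (2 : K) • y) (hyx : ⁅y, x⁆ = h)
    -- `M` is a graded subspace of `𝔤`, invariant under `ad x`, `ad h` and `ad y`:
    (M : Submodule K L)
    (hMgraded : M = ⨆ i : ℤ, M ⊓ g i)
    (hMx : ∀ m ∈ M, ⁅x, m⁆ ∈ M) (hMh : ∀ m ∈ M, ⁅h, m⁆ ∈ M) (hMy : ∀ m ∈ M, ⁅y, m⁆ ∈ M) :
    -- `M ∩ 𝔭` is the internal direct sum of `{u ∈ M ∩ 𝔭 : ⁅u,y⁆ = 0}` and `⁅x, M⁆ ∩ 𝔭`: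
    ((M ⊓ ⨆ i ≥ (0 : ℤ), g i) ⊓ kerRight y) ⊓
        (Submodule.map (LieAlgebra.ad K L x) M ⊓ ⨆ i ≥ (0 : ℤ), g i) = ⊥ ∧
    ((M ⊓ ⨆ i ≥ (0 : ℤ), g i) ⊓ kerRight y) ⊔
        (Submodule.map (LieAlgebra.ad K L x) M ⊓ ⨆ i ≥ (0 : ℤ), g i) =
      M ⊓ ⨆ i ≥ (0 : ℤ), g i := by
  classical
  set F := LieAlgebra.ad K L x with hFdef
  set E := LieAlgebra.ad K L y with hEdef
  set Had := LieAlgebra.ad K L h with hHaddef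
  -- the sl₂ operator relations
  letI : LieRing (Module.End K L) := LieRing.ofAssociativeRing
  have hH : E * F - F * E = Had := by
    rw [← Ring.lie_def]
    have h1 : ⁅E, F⁆ = LieAlgebra.ad K L ⁅y, x⁆ := (LieHom.map_lie _ _ _).symm
    rw [h1, hyx]
  have hHE : Had * E - E * Had = (2 : K) • E := by
    rw [← Ring.lie_def]
    have h1 : ⁅Had, E⁆ = LieAlgebra.ad K L ⁅h, y⁆ := (LieHom.map_lie _ _ _).symm
    rw [h1, hhy, map_smul]
  have hHF : Had * F - F * Had = (-2 : K) • F := by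
    rw [← Ring.lie_def]
    have h1 : ⁅Had, F⁆ = LieAlgebra.ad K L ⁅h, x⁆ := (LieHom.map_lie _ _ _).symm
    rw [h1, hhx, map_smul]
  -- nilpotency
  obtain ⟨N1, hN1⟩ := ad_nilpotent hdsum hfin hbr hx (by norm_num)
  obtain ⟨N2, hN2⟩ := ad_nilpotent hdsum hfin hbr hy (by norm_num)
  rw [← hFdef] at hN1
  rw [← hEdef] at hN2
  -- the two key vanishing results
  have l1 : LinearMap.ker E ⊓ LinearMap.range F = ⊥ :=
    sl2_ker_inf_range hH hHE hHF N1 hN1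
  have hH2 : F * E - E * F = -Had := by rw [← hH]; noncomm_ring
  have hHE2 : (-Had) * F - F * (-Had) = (2 : K) • F := by
    have : (-Had) * F - F * (-Had) = -(Had * F - F * Had) := by noncomm_ring
    rw [this, hHF, ← neg_smul]; norm_num
  have hHF2 : (-Had) * E - E * (-Had) = (-2 : K) • E := by
    have : (-Had) * E - E * (-Had) = -(Had * E - E * Had) := by noncomm_ring
    rw [this, hHE, ← neg_smul]
  have l2 : LinearMap.ker F ⊓ LinearMap.range E = ⊥ :=
    sl2_ker_inf_range hH2 hHE2 hHF2 N2 hN2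
  -- stability of M
  have mapF_le_M : Submodule.map F M ≤ M := by
    rintro v ⟨m, hm, rfl⟩
    rw [hFdef, LieAlgebra.ad_apply]
    exact hMx m hm
  have mapE_le_M : Submodule.map E M ≤ M := by
    rintro v ⟨m, hm, rfl⟩
    rw [hEdef, LieAlgebra.ad_apply]
    exact hMy m hm
  -- disjointness inside M
  have d1 : (M ⊓ LinearMap.ker E) ⊓ Submodule.map F M = ⊥ := by
    have hle : (M ⊓ LinearMap.ker E) ⊓ Submodule.map F M
        ≤ LinearMap.ker E ⊓ LinearMap.range F :=
      inf_le_inf (inf_le_right) LinearMap.map_le_range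
    rw [l1] at hle
    exact le_bot_iff.mp hle
  have d2 : (M ⊓ LinearMap.ker F) ⊓ Submodule.map E M = ⊥ := by
    have hle : (M ⊓ LinearMap.ker F) ⊓ Submodule.map E M
        ≤ LinearMap.ker F ⊓ LinearMap.range E :=
      inf_le_inf (inf_le_right) LinearMap.map_le_range
    rw [l2] at hle
    exact le_bot_iff.mp hle
  -- dimension bookkeeping
  have rn1 := finrank_map_add_inf_ker F M
  have rn2 := finrank_map_add_inf_ker E M
  have s1 : finrank K ↥((M ⊓ LinearMap.ker E) ⊔ Submodule.map F M)
      = finrank K ↥(M ⊓ LinearMap.ker E) + finrank K ↥(Submodule.map F M) := by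
    have hs := Submodule.finrank_sup_add_finrank_inf_eq
      (M ⊓ LinearMap.ker E) (Submodule.map F M)
    rw [d1] at hs
    simpa using hs
  have s2 : finrank K ↥((M ⊓ LinearMap.ker F) ⊔ Submodule.map E M)
      = finrank K ↥(M ⊓ LinearMap.ker F) + finrank K ↥(Submodule.map E M) := by
    have hs := Submodule.finrank_sup_add_finrank_inf_eq
      (M ⊓ LinearMap.ker F) (Submodule.map E M)
    rw [d2] at hs
    simpa using hs
  have le1 : (M ⊓ LinearMap.ker E) ⊔ Submodule.map F M ≤ M :=
    sup_le inf_le_left mapF_le_M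
  have le2 : (M ⊓ LinearMap.ker F) ⊔ Submodule.map E M ≤ M :=
    sup_le inf_le_left mapE_le_M
  have f1 : finrank K ↥((M ⊓ LinearMap.ker E) ⊔ Submodule.map F M) ≤ finrank K ↥M :=
    Submodule.finrank_mono le1
  have f2 : finrank K ↥((M ⊓ LinearMap.ker F) ⊔ Submodule.map E M) ≤ finrank K ↥M :=
    Submodule.finrank_mono le2
  have keyeq : finrank K ↥M ≤ finrank K ↥((M ⊓ LinearMap.ker E) ⊔ Submodule.map F M) := by
    omega
  have m2 : (M ⊓ LinearMap.ker E) ⊔ Submodule.map F M = M :=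
    Submodule.eq_of_le_of_finrank_le le1 keyeq
  -- graded facts
  have htop : (⨆ i, g i) = ⊤ := hdsum.submodule_iSup_eq_top
  have gE : ∀ i, ∀ v ∈ g i, E v ∈ g (i + 1) := by
    intro i v hv
    rw [hEdef, LieAlgebra.ad_apply]
    have := hbr 1 i y hy v hv
    rwa [add_comm] at this
  have gF : ∀ i, ∀ v ∈ g i, F v ∈ g (i + (-1)) := by
    intro i v hv
    rw [hFdef, LieAlgebra.ad_apply]
    have := hbr (-1) i x hx v hv
    rwa [add_comm] at this
  have kerRight_eq : kerRight y = LinearMap.ker E := by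
    ext u
    have h1 : u ∈ (kerRight y : Submodule K L) ↔ ⁅u, y⁆ = 0 := Iff.rfl
    rw [h1, LinearMap.mem_ker, hEdef, LieAlgebra.ad_apply, ← lie_skew u y, neg_eq_zero]
  constructor
  · -- disjointness
    have hle : ((M ⊓ ⨆ i ≥ (0 : ℤ), g i) ⊓ kerRight y) ⊓
        (Submodule.map F M ⊓ ⨆ i ≥ (0 : ℤ), g i)
        ≤ LinearMap.ker E ⊓ LinearMap.range F := by
      rintro v ⟨⟨_, hv2⟩, hv3, _⟩
      exact ⟨kerRight_eq ▸ hv2, LinearMap.map_le_range hv3⟩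
    rw [l1] at hle
    exact le_bot_iff.mp hle
  · -- the sum
    apply le_antisymm
    · exact sup_le inf_le_left (le_inf (le_trans inf_le_left mapF_le_M) inf_le_right)
    · rintro u ⟨huM, huP⟩
      rw [← m2] at huM
      obtain ⟨a, ha, b, hb, rfl⟩ := Submodule.mem_sup.mp huM
      have cA : ∀ i, gproj g hdsum i a ∈ M ⊓ LinearMap.ker E := by
        intro i
        refine ⟨gproj_mem_of_graded hdsum hMgraded ha.1 i, ?_⟩
        have hEa : E a = 0 := ha.2
        show E (gproj g hdsum i a) = 0
        rw [gproj_comm hdsum htop E 1 gE i a, hEa, map_zero]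
      have cB : ∀ i, gproj g hdsum i b ∈ Submodule.map F M := by
        intro i
        obtain ⟨m, hm, rfl⟩ := hb
        refine ⟨gproj g hdsum (i+1) m, gproj_mem_of_graded hdsum hMgraded hm (i+1), ?_⟩
        have hc := gproj_comm hdsum htop F (-1) gF (i+1) m
        rwa [show (i+1) + (-1:ℤ) = i by ring] at hc
      have cz : ∀ i : ℤ, ¬ (i ≥ 0) → gproj g hdsum i a = 0 ∧ gproj g hdsum i b = 0 := by
        intro i hi
        have hzu : gproj g hdsum i (a + b) = 0 := gproj_eq_zero_of_mem_biSup hdsum huP hi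
        rw [map_add] at hzu
        have hmem : gproj g hdsum i a ∈ (M ⊓ LinearMap.ker E) ⊓ Submodule.map F M := by
          refine ⟨cA i, ?_⟩
          rw [eq_neg_of_add_eq_zero_left hzu]
          exact Submodule.neg_mem _ (cB i)
        rw [d1, Submodule.mem_bot] at hmem
        refine ⟨hmem, ?_⟩
        rw [hmem, zero_add] at hzu
        exact hzu
      have haP : a ∈ ⨆ i ≥ (0 : ℤ), g i :=
        gproj_mem_biSup hdsum (fun i hi => (cz i hi).1)
      have hbP : b ∈ ⨆ i ≥ (0 : ℤ), g i :=
        gproj_mem_biSup hdsum (fun i hi => (cz i hi).2)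
      have hakr : a ∈ (kerRight y : Submodule K L) := by
        rw [kerRight_eq]
        exact ha.2
      exact Submodule.add_mem_sup ⟨⟨ha.1, haP⟩, hakr⟩ ⟨hb, hbP⟩
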